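/- Let y : ℝ → ℝ be a twice differentiable function satisfying the ordinary differential equation ÿ(t) = y(t) ẏ(t) √(1 − ẏ(t)²) with |ẏ(t)| < 1 for all t. Then the function t ↦ y(t)²/2 − arcsin(ẏ(t)) is constant. -/

import Mathlib

/-- The ODE `ÿ = y ẏ √(1 − ẏ²)` (describing the `y`-coordinate of a unit-speed geodesic of
the vectorial torsion connection of `V = y ∂_x` in the plane) has the invariant of motion
`y²/2 − arcsin ẏ`. -/
theorem invariant_of_motion_y_ODE
    (y : ℝ → ℝ)
    (hy : Differentiable ℝ y) (hy' : Differentiable ℝ (deriv y))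
    (hbound : ∀ t : ℝ, |deriv y t| < 1)
    (hODE : ∀ t : ℝ, deriv (deriv y) t
        = y t * deriv y t * Real.sqrt (1 - (deriv y t) ^ 2)) :
    ∀ s t : ℝ, (y s) ^ 2 / 2 - Real.arcsin (deriv y s)
      = (y t) ^ 2 / 2 - Real.arcsin (deriv y t) := by
  set F : ℝ → ℝ := fun t => (y t) ^ 2 / 2 - Real.arcsin (deriv y t) with hF
  have key : ∀ t : ℝ, HasDerivAt F 0 t := by
    intro t
    have hb := abs_lt.1 (hbound t)
    have hne1 : deriv y t ≠ 1 := ne_of_lt hb.2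
    have hnem1 : deriv y t ≠ -1 := ne_of_gt hb.1
    have hpos : 0 < 1 - (deriv y t) ^ 2 := by nlinarith [hb.1, hb.2]
    have hsqrt : Real.sqrt (1 - (deriv y t) ^ 2) ≠ 0 :=
      ne_of_gt (Real.sqrt_pos.2 hpos)
    have h1 : HasDerivAt (fun t => (y t) ^ 2 / 2) (y t * deriv y t) t := by
      have : HasDerivAt (fun x => y x ^ 2 / 2) (↑2 * y t ^ (2 - 1) * deriv y t / 2) t :=
        ((hy t).hasDerivAt.pow 2).div_const 2
      convert this using 1
      ring
    have harcsin : HasDerivAt Real.arcsin (1 / Real.sqrt (1 - (deriv y t) ^ 2))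
        (deriv y t) := Real.hasDerivAt_arcsin hnem1 hne1
    have h2 : HasDerivAt (fun t => Real.arcsin (deriv y t))
        (1 / Real.sqrt (1 - (deriv y t) ^ 2) * deriv (deriv y) t) t :=
      harcsin.comp t (hy' t).hasDerivAt
    have h2' : HasDerivAt (fun t => Real.arcsin (deriv y t)) (y t * deriv y t) t := by
      convert h2 using 1
      rw [hODE t]
      field_simp
    have := h1.sub h2'
    rw [sub_self] at this
    exact this
  intro s t
  have : F s = F t := by
    have hdiff : Differentiable ℝ F := fun x => (key x).differentiableAt
    have hzero : ∀ x, deriv F x = 0 := fun x => (key x).deriv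
    exact is_const_of_deriv_eq_zero hdiff hzero s t
  simpa [hF] using this
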